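/- Let 1 < p < 5, α > 0, β > 0 and γ, μ, s > 0. Then the infimum I(γ, μ, s) is finite and strictly negative: −∞ < I(γ, μ, s) < 0. -/

import Mathlib

open MeasureTheory Filter Complex

noncomputable section

/-- Membership in `H¹(ℝ, ℂ)` (modeled via the classical derivative). -/
def InH1 (f : ℝ → ℂ) : Prop :=
  MemLp f 2 (volume : Measure ℝ) ∧ Differentiable ℝ f ∧
    MemLp (deriv f) 2 (volume : Measure ℝ)

/-- `‖f‖_{L²}²`. -/
def massSq (f : ℝ → ℂ) : ℝ := ∫ x : ℝ, ‖f x‖ ^ 2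

/-- `‖∂ₓ f‖_{L²}²`. -/
def kinetic (f : ℝ → ℂ) : ℝ := ∫ x : ℝ, ‖deriv f x‖ ^ 2

/-- `∫ |f|^{p+1}`. -/
def potential (p : ℝ) (f : ℝ → ℂ) : ℝ := ∫ x : ℝ, ‖f x‖ ^ (p + 1)

/-- `Re ∫ u₁ u₂ (conj u₃)`. -/
def interaction (u1 u2 u3 : ℝ → ℂ) : ℝ :=
  ∫ x : ℝ, (u1 x * u2 x * (starRingEnd ℂ) (u3 x)).re

/-- The energy functional `E`. -/
def energy (p α β : ℝ) (u1 u2 u3 : ℝ → ℂ) : ℝ :=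
  ((1 / 2) * kinetic u1 - β / (p + 1) * potential p u1)
    + ((1 / 2) * kinetic u2 - β / (p + 1) * potential p u2)
    + ((1 / 2) * kinetic u3 - β / (p + 1) * potential p u3)
    - α * interaction u1 u2 u3

/-- The set of energies of admissible triples for `I(γ, μ, s)`. -/
def constraintSet (p α β γ μ s : ℝ) : Set ℝ :=
  { e | ∃ u1 u2 u3 : ℝ → ℂ, InH1 u1 ∧ InH1 u2 ∧ InH1 u3 ∧
      massSq u1 = γ ∧ massSq u2 = μ ∧ massSq u3 = s ∧ e = energy p α β u1 u2 u3 }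

/-- `I(γ, μ, s)`. -/
def Iinf (p α β γ μ s : ℝ) : ℝ := sInf (constraintSet p α β γ μ s)

/-- A minimizing sequence for `I(γ, μ, s)`. -/
def MinimizingSeq (p α β γ μ s : ℝ) (u1 u2 u3 : ℕ → ℝ → ℂ) : Prop :=
  (∀ n, InH1 (u1 n) ∧ InH1 (u2 n) ∧ InH1 (u3 n)) ∧
  Tendsto (fun n => massSq (u1 n)) atTop (nhds γ) ∧
  Tendsto (fun n => massSq (u2 n)) atTop (nhds μ) ∧
  Tendsto (fun n => massSq (u3 n)) atTop (nhds s) ∧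
  Tendsto (fun n => energy p α β (u1 n) (u2 n) (u3 n)) atTop
    (nhds (Iinf p α β γ μ s))

/-- `∫_{y-r}^{y+r} (|u₁|² + |u₂|² + |u₃|²)`. -/
def localMass (u1 u2 u3 : ℝ → ℂ) (y r : ℝ) : ℝ :=
  ∫ x in Set.Icc (y - r) (y + r), (‖u1 x‖ ^ 2 + ‖u2 x‖ ^ 2 + ‖u3 x‖ ^ 2)

/-- `λ` is the concentration parameter of the sequence. -/
def IsConcentration (u1 u2 u3 : ℕ → ℝ → ℂ) (lam : ℝ) : Prop :=
  Tendsto (fun r : ℝ =>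
      limsup (fun n => ⨆ y : ℝ, localMass (u1 n) (u2 n) (u3 n) y r) atTop)
    atTop (nhds lam)

/-- The squared `H¹` norm. -/
def H1normSq (f : ℝ → ℂ) : ℝ := massSq f + kinetic f

/-- The `H¹(ℝ; ℂ³)` distance between two triples. -/
def H1dist3 (u v : (ℝ → ℂ) × (ℝ → ℂ) × (ℝ → ℂ)) : ℝ :=
  Real.sqrt (H1normSq (u.1 - v.1) + H1normSq (u.2.1 - v.2.1)
    + H1normSq (u.2.2 - v.2.2))

/-- The set `𝒢_{γ,μ,s}` of minimizers of `I(γ, μ, s)`. -/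
def GSet (p α β γ μ s : ℝ) : Set ((ℝ → ℂ) × (ℝ → ℂ) × (ℝ → ℂ)) :=
  { u | InH1 u.1 ∧ InH1 u.2.1 ∧ InH1 u.2.2 ∧
      massSq u.1 = γ ∧ massSq u.2.1 = μ ∧ massSq u.2.2 = s ∧
      energy p α β u.1 u.2.1 u.2.2 = Iinf p α β γ μ s }

/-- Symmetric decreasing rearrangement of a real function:
`f*(x) = |{t > 0 : x ∈ I_t}|` where `I_t` is the open interval centered at `0`
of length `|{ z : |f z| > t }|`. -/
def symmRearr (f : ℝ → ℝ) (x : ℝ) : ℝ :=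
  (volume { t : ℝ | 0 < t ∧
      ENNReal.ofReal (2 * |x|) < volume { z : ℝ | t < |f z| } }).toReal

/-- The constraint set for `J(γ, μ)` (with `Q₁(u) = γ`, `Q₂(u) = μ`). -/
def JconstraintSet (p α β γ μ : ℝ) : Set ℝ :=
  { e | ∃ u1 u2 u3 : ℝ → ℂ, InH1 u1 ∧ InH1 u2 ∧ InH1 u3 ∧
      massSq u1 + massSq u3 = γ ∧ massSq u2 + massSq u3 = μ ∧
      e = energy p α β u1 u2 u3 }

/-- `J(γ, μ)`. -/
def Jinf (p α β γ μ : ℝ) : ℝ := sInf (JconstraintSet p α β γ μ)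

/-- A minimizing sequence for `J(γ, μ)`. -/
def JMinimizingSeq (p α β γ μ : ℝ) (u1 u2 u3 : ℕ → ℝ → ℂ) : Prop :=
  (∀ n, InH1 (u1 n) ∧ InH1 (u2 n) ∧ InH1 (u3 n)) ∧
  Tendsto (fun n => massSq (u1 n) + massSq (u3 n)) atTop (nhds γ) ∧
  Tendsto (fun n => massSq (u2 n) + massSq (u3 n)) atTop (nhds μ) ∧
  Tendsto (fun n => energy p α β (u1 n) (u2 n) (u3 n)) atTop
    (nhds (Jinf p α β γ μ))

/-- The set `ℳ_{γ,μ}` of minimizers of `J(γ, μ)`. -/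
def MSet (p α β γ μ : ℝ) : Set ((ℝ → ℂ) × (ℝ → ℂ) × (ℝ → ℂ)) :=
  { u | InH1 u.1 ∧ InH1 u.2.1 ∧ InH1 u.2.2 ∧
      massSq u.1 + massSq u.2.2 = γ ∧ massSq u.2.1 + massSq u.2.2 = μ ∧
      energy p α β u.1 u.2.1 u.2.2 = Jinf p α β γ μ }

end

noncomputable section Aux
open MeasureTheory Filter Complex Real

lemma aux_massSq_nonneg (f : ℝ → ℂ) : 0 ≤ massSq f :=
  integral_nonneg fun x => by positivity

lemma aux_kinetic_nonneg (f : ℝ → ℂ) : 0 ≤ kinetic f :=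
  integral_nonneg fun x => by positivity

lemma aux_integrable_sq {f : ℝ → ℂ} (hf : MemLp f 2 (volume : Measure ℝ)) :
    Integrable (fun x => ‖f x‖ ^ 2) (volume : Measure ℝ) :=
  (memLp_two_iff_integrable_sq_norm hf.aestronglyMeasurable).mp hf

lemma aux_integrable_norm_mul {f g : ℝ → ℂ} (hf : MemLp f 2 (volume : Measure ℝ))
    (hg : MemLp g 2 (volume : Measure ℝ)) :
    Integrable (fun x => ‖f x‖ * ‖g x‖) (volume : Measure ℝ) := by
  have h : MemLp ((fun x => ‖f x‖) • (fun x => ‖g x‖)) 1 (volume : Measure ℝ) :=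
    MemLp.smul hg.norm hf.norm (hpqr := ENNReal.holderConjugate_iff.mpr ENNReal.inv_two_add_inv_two)
  rw [← memLp_one_iff_integrable]
  exact h

lemma aux_cauchy_schwarz {f g : ℝ → ℂ} (hf : MemLp f 2 (volume : Measure ℝ))
    (hg : MemLp g 2 (volume : Measure ℝ)) :
    ∫ x : ℝ, ‖f x‖ * ‖g x‖ ≤
      Real.sqrt (∫ x : ℝ, ‖f x‖ ^ 2) * Real.sqrt (∫ x : ℝ, ‖g x‖ ^ 2) := by
  have hpq : Real.HolderConjugate 2 2 := Real.holderConjugate_iff.mpr ⟨one_lt_two, by norm_num⟩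
  have h2 : ENNReal.ofReal (2 : ℝ) = 2 := by norm_num
  have h := integral_mul_le_Lp_mul_Lq_of_nonneg hpq
    (f := fun x => ‖f x‖) (g := fun x => ‖g x‖)
    (ae_of_all _ fun x => norm_nonneg _) (ae_of_all _ fun x => norm_nonneg _)
    (h2 ▸ hf.norm) (h2 ▸ hg.norm)
  simp only [Real.rpow_two] at h
  rw [Real.sqrt_eq_rpow, Real.sqrt_eq_rpow]
  exact h


lemma aux_sq_norm_le {f : ℝ → ℂ} (hf : InH1 f) (x : ℝ) :
    ‖f x‖ ^ 2 ≤ 2 * (Real.sqrt (massSq f) * Real.sqrt (kinetic f)) := by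
  obtain ⟨hf2, hfd, hfd2⟩ := hf
  set D : ℝ → ℝ := fun t => inner ℝ (f t) (deriv f t) + inner ℝ (deriv f t) (f t) with hD
  have hderiv : ∀ t : ℝ, HasDerivAt (fun t => ‖f t‖ ^ 2) (D t) t := by
    intro t
    have h1 : HasDerivAt f (deriv f t) t := (hfd t).hasDerivAt
    have h2 := h1.inner (𝕜 := ℝ) h1
    simpa [D, real_inner_self_eq_norm_sq] using h2
  have hmD : AEStronglyMeasurable D (volume : Measure ℝ) := by
    have h1 : AEStronglyMeasurable f (volume : Measure ℝ) := hf2.aestronglyMeasurable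
    have h2 : AEStronglyMeasurable (deriv f) (volume : Measure ℝ) :=
      (measurable_deriv f).aestronglyMeasurable
    exact (h1.inner h2).add (h2.inner h1)
  have hG : Integrable (fun t => ‖f t‖ * ‖deriv f t‖) (volume : Measure ℝ) :=
    aux_integrable_norm_mul hf2 hfd2
  have hG2 : Integrable (fun t => 2 * (‖f t‖ * ‖deriv f t‖)) (volume : Measure ℝ) :=
    hG.const_mul 2
  have hDle : ∀ t, |D t| ≤ 2 * (‖f t‖ * ‖deriv f t‖) := by
    intro t
    have ha := abs_real_inner_le_norm (f t) (deriv f t)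
    have hb := abs_real_inner_le_norm (deriv f t) (f t)
    calc |D t| ≤ |(inner ℝ (f t) (deriv f t) : ℝ)| + |(inner ℝ (deriv f t) (f t) : ℝ)| :=
          abs_add_le _ _
      _ ≤ 2 * (‖f t‖ * ‖deriv f t‖) := by rw [mul_comm ‖deriv f t‖ ‖f t‖] at hb; linarith
  have hDint : Integrable D (volume : Measure ℝ) := by
    refine hG2.mono' hmD ?_
    filter_upwards with t
    rw [Real.norm_eq_abs]
    exact hDle t
  have hCS : ∫ t : ℝ, ‖f t‖ * ‖deriv f t‖ ≤ Real.sqrt (massSq f) * Real.sqrt (kinetic f) :=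
    aux_cauchy_schwarz hf2 hfd2
  have key : ∀ y : ℝ, y ≤ x →
      ‖f x‖ ^ 2 ≤ ‖f y‖ ^ 2 + 2 * (Real.sqrt (massSq f) * Real.sqrt (kinetic f)) := by
    intro y hy
    have hFTC : ∫ t in y..x, D t = ‖f x‖ ^ 2 - ‖f y‖ ^ 2 :=
      intervalIntegral.integral_eq_sub_of_hasDerivAt (fun t _ => hderiv t)
        hDint.intervalIntegrable
    have h1 : ∫ t in y..x, D t ≤ ∫ t in y..x, 2 * (‖f t‖ * ‖deriv f t‖) :=
      intervalIntegral.integral_mono_on hy hDint.intervalIntegrable hG2.intervalIntegrable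
        (fun t _ => le_trans (le_abs_self _) (hDle t))
    have h2 : ∫ t in y..x, 2 * (‖f t‖ * ‖deriv f t‖)
        ≤ ∫ t : ℝ, 2 * (‖f t‖ * ‖deriv f t‖) := by
      rw [intervalIntegral.integral_of_le hy]
      exact setIntegral_le_integral hG2 (ae_of_all _ fun t => by positivity)
    have h3 : ∫ t : ℝ, 2 * (‖f t‖ * ‖deriv f t‖)
        ≤ 2 * (Real.sqrt (massSq f) * Real.sqrt (kinetic f)) := by
      rw [MeasureTheory.integral_const_mul]
      linarith
    nlinarith [hFTC, h1, h2, h3]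
  have hm : Integrable (fun t => ‖f t‖ ^ 2) (volume : Measure ℝ) := aux_integrable_sq hf2
  refine le_of_forall_pos_le_add fun ε hε => ?_
  set M := ∫ t : ℝ, ‖f t‖ ^ 2 with hM
  have hM0 : 0 ≤ M := integral_nonneg fun t => by positivity
  set L := (M + 1) / ε with hL
  have hLpos : 0 < L := by positivity
  have hex : ∃ y ∈ Set.Icc (x - L) x, ‖f y‖ ^ 2 ≤ ε := by
    by_contra hcon
    push_neg at hcon
    have h1 : ε * (volume (Set.Icc (x - L) x)).toReal ≤ ∫ t in Set.Icc (x - L) x, ‖f t‖ ^ 2 :=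
      by
        have h := setIntegral_ge_of_const_le measurableSet_Icc measure_Icc_lt_top.ne
          (fun y hy => (hcon y hy).le) hm.integrableOn
        rw [smul_eq_mul, mul_comm] at h
        exact h
    have hvol : (volume (Set.Icc (x - L) x)).toReal = L := by
      rw [Real.volume_Icc, ENNReal.toReal_ofReal (by linarith)]
      ring
    have h2 : ∫ t in Set.Icc (x - L) x, ‖f t‖ ^ 2 ≤ M :=
      setIntegral_le_integral hm (ae_of_all _ fun t => by positivity)
    rw [hvol] at h1
    have : ε * L = M + 1 := by rw [hL]; field_simp
    linarith
  obtain ⟨y, hy, hyε⟩ := hex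
  have := key y hy.2
  linarith

lemma aux_potential_le {f : ℝ → ℂ} (hf : InH1 f) {p : ℝ} (hp : 1 < p) :
    potential p f ≤
      (2 * (Real.sqrt (massSq f) * Real.sqrt (kinetic f))) ^ ((p - 1) / 2) * massSq f := by
  set S := 2 * (Real.sqrt (massSq f) * Real.sqrt (kinetic f)) with hS
  have hS0 : 0 ≤ S := by positivity
  have hm : Integrable (fun t => ‖f t‖ ^ 2) (volume : Measure ℝ) := aux_integrable_sq hf.1
  have hint : Integrable (fun x => S ^ ((p - 1) / 2) * ‖f x‖ ^ 2) (volume : Measure ℝ) :=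
    hm.const_mul _
  have hptw : ∀ x : ℝ, ‖f x‖ ^ (p + 1) ≤ S ^ ((p - 1) / 2) * ‖f x‖ ^ 2 := by
    intro x
    rcases eq_or_lt_of_le (norm_nonneg (f x)) with h0 | h0
    · rw [← h0, Real.zero_rpow (by linarith)]
      positivity
    · have h1 : ‖f x‖ ^ (p + 1) = ‖f x‖ ^ (p - 1) * ‖f x‖ ^ 2 := by
        rw [← Real.rpow_two, ← Real.rpow_add h0]
        ring_nf
      rw [h1]
      have h2 : ‖f x‖ ^ (p - 1) = (‖f x‖ ^ 2) ^ ((p - 1) / 2) := by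
        rw [← Real.rpow_two, ← Real.rpow_mul (norm_nonneg _)]
        ring_nf
      have h3 : (‖f x‖ ^ 2) ^ ((p - 1) / 2) ≤ S ^ ((p - 1) / 2) :=
        Real.rpow_le_rpow (by positivity) (aux_sq_norm_le hf x) (by linarith)
      have h4 : (0:ℝ) ≤ ‖f x‖ ^ 2 := by positivity
      nlinarith [h2, h3, h4]
  calc potential p f ≤ ∫ x : ℝ, S ^ ((p - 1) / 2) * ‖f x‖ ^ 2 :=
        integral_mono_of_nonneg (ae_of_all _ fun x => by positivity) hint
          (ae_of_all _ hptw)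
    _ = S ^ ((p - 1) / 2) * massSq f := by rw [MeasureTheory.integral_const_mul]; rfl

lemma aux_interaction_le {u1 u2 u3 : ℝ → ℂ} (h1 : InH1 u1) (h2 : InH1 u2) (h3 : InH1 u3) :
    |interaction u1 u2 u3| ≤
      Real.sqrt (2 * (Real.sqrt (massSq u1) * Real.sqrt (kinetic u1))) *
        (Real.sqrt (massSq u2) * Real.sqrt (massSq u3)) := by
  set S := 2 * (Real.sqrt (massSq u1) * Real.sqrt (kinetic u1)) with hS
  have hS0 : 0 ≤ S := by positivity
  have hprod : Integrable (fun x => ‖u2 x‖ * ‖u3 x‖) (volume : Measure ℝ) :=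
    aux_integrable_norm_mul h2.1 h3.1
  have hbound : Integrable (fun x => Real.sqrt S * (‖u2 x‖ * ‖u3 x‖)) (volume : Measure ℝ) :=
    hprod.const_mul _
  have hptw : ∀ x : ℝ, ‖(u1 x * u2 x * (starRingEnd ℂ) (u3 x)).re‖
      ≤ Real.sqrt S * (‖u2 x‖ * ‖u3 x‖) := by
    intro x
    have ha : ‖u1 x‖ ≤ Real.sqrt S := by
      have := aux_sq_norm_le h1 x
      have h := Real.sqrt_le_sqrt this
      rwa [Real.sqrt_sq (norm_nonneg _)] at h
    calc ‖(u1 x * u2 x * (starRingEnd ℂ) (u3 x)).re‖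
        ≤ ‖u1 x * u2 x * (starRingEnd ℂ) (u3 x)‖ := by
          rw [Real.norm_eq_abs]; exact Complex.abs_re_le_norm _
      _ = ‖u1 x‖ * ‖u2 x‖ * ‖u3 x‖ := by
          rw [norm_mul, norm_mul, RCLike.norm_conj]
      _ ≤ Real.sqrt S * (‖u2 x‖ * ‖u3 x‖) := by
          rw [mul_assoc]
          exact mul_le_mul_of_nonneg_right ha (by positivity)
  have habs : |interaction u1 u2 u3| ≤ ∫ x : ℝ, Real.sqrt S * (‖u2 x‖ * ‖u3 x‖) := by
    rw [← Real.norm_eq_abs]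
    exact norm_integral_le_of_norm_le hbound (ae_of_all _ hptw)
  have hCS : ∫ x : ℝ, ‖u2 x‖ * ‖u3 x‖ ≤ Real.sqrt (massSq u2) * Real.sqrt (massSq u3) :=
    aux_cauchy_schwarz h2.1 h3.1
  calc |interaction u1 u2 u3| ≤ ∫ x : ℝ, Real.sqrt S * (‖u2 x‖ * ‖u3 x‖) := habs
    _ = Real.sqrt S * ∫ x : ℝ, ‖u2 x‖ * ‖u3 x‖ := MeasureTheory.integral_const_mul _ _
    _ ≤ Real.sqrt S * (Real.sqrt (massSq u2) * Real.sqrt (massSq u3)) := by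
        apply mul_le_mul_of_nonneg_left hCS (Real.sqrt_nonneg _)

lemma aux_young (C b : ℝ) (hC : 0 ≤ C) (hb : 0 < b) (hb2 : b < 2) :
    ∃ D : ℝ, 0 ≤ D ∧ ∀ t : ℝ, 0 ≤ t → C * t ^ b ≤ (1 / 8) * t ^ 2 + D := by
  set M := max 1 ((8 * C) ^ (1 / (2 - b))) with hM
  have hM1 : (1:ℝ) ≤ M := le_max_left _ _
  have hM0 : (0:ℝ) < M := lt_of_lt_of_le one_pos hM1
  refine ⟨C * M ^ b, by positivity, fun t ht => ?_⟩
  rcases le_or_gt t M with htM | htM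
  · have : C * t ^ b ≤ C * M ^ b :=
      mul_le_mul_of_nonneg_left (Real.rpow_le_rpow ht htM hb.le) hC
    nlinarith [sq_nonneg t]
  · have ht0 : (0:ℝ) < t := lt_trans hM0 htM
    have key : C * t ^ (b - 2) ≤ 1 / 8 := by
      rcases eq_or_lt_of_le hC with h0 | h0
      · rw [← h0]; norm_num
      · have hMb : 8 * C ≤ M ^ (2 - b) := by
          have h8 : (0:ℝ) ≤ 8 * C := by positivity
          calc 8 * C = ((8 * C) ^ (1 / (2 - b))) ^ (2 - b) := by
                rw [← Real.rpow_mul h8, one_div, inv_mul_cancel₀ (by linarith : 2 - b ≠ 0),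
                  Real.rpow_one]
            _ ≤ M ^ (2 - b) := Real.rpow_le_rpow (Real.rpow_nonneg h8 _)
                (le_max_right _ _) (by linarith)
        have ht2 : t ^ (b - 2) ≤ M ^ (b - 2) :=
          Real.rpow_le_rpow_of_nonpos hM0 htM.le (by linarith)
        have hMinv : M ^ (b - 2) = (M ^ (2 - b))⁻¹ := by
          rw [← Real.rpow_neg hM0.le]; ring_nf
        have h8C : (0:ℝ) < 8 * C := by positivity
        have hA : C * t ^ (b - 2) ≤ C * (M ^ (2 - b))⁻¹ := by
          rw [← hMinv]
          exact mul_le_mul_of_nonneg_left ht2 hC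
        have hB : C * (M ^ (2 - b))⁻¹ ≤ C * (8 * C)⁻¹ :=
          mul_le_mul_of_nonneg_left (inv_anti₀ h8C hMb) hC
        have hCC : C * (8 * C)⁻¹ = 1 / 8 := by field_simp
        linarith
    have hsplit : t ^ b = t ^ (b - 2) * t ^ 2 := by
      rw [← Real.rpow_two, ← Real.rpow_add ht0]
      ring_nf
    calc C * t ^ b = (C * t ^ (b - 2)) * t ^ 2 := by rw [hsplit]; ring
      _ ≤ (1 / 8) * t ^ 2 :=
          mul_le_mul_of_nonneg_right key (by positivity)
      _ ≤ (1 / 8) * t ^ 2 + C * M ^ b := by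
          have : (0:ℝ) ≤ C * M ^ b := by positivity
          linarith

lemma aux_bddBelow (p α β γ μ s : ℝ) (hp : 1 < p) (hp5 : p < 5) (hα : 0 < α) (hβ : 0 < β)
    (hγ : 0 ≤ γ) (hμ : 0 ≤ μ) (hs : 0 ≤ s) :
    BddBelow (constraintSet p α β γ μ s) := by
  have hp1 : (0:ℝ) < p + 1 := by linarith
  set b := (p - 1) / 2 with hbdef
  have hb : 0 < b := by simp only [hbdef]; linarith
  have hb2 : b < 2 := by simp only [hbdef]; linarith
  set C1 := β / (p + 1) * ((2 * Real.sqrt γ) ^ b * γ) with hC1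
  set C2 := β / (p + 1) * ((2 * Real.sqrt μ) ^ b * μ) with hC2
  set C3 := β / (p + 1) * ((2 * Real.sqrt s) ^ b * s) with hC3
  set C0 := α * (Real.sqrt (2 * Real.sqrt γ) * (Real.sqrt μ * Real.sqrt s)) with hC0
  obtain ⟨D1, hD1n, hD1⟩ := aux_young C1 b (by positivity) hb hb2
  obtain ⟨D2, hD2n, hD2⟩ := aux_young C2 b (by positivity) hb hb2
  obtain ⟨D3, hD3n, hD3⟩ := aux_young C3 b (by positivity) hb hb2
  obtain ⟨D0, hD0n, hD0⟩ := aux_young C0 (1/2) (by positivity) (by norm_num) (by norm_num)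
  refine ⟨-(D1 + D2 + D3 + D0), fun e he => ?_⟩
  obtain ⟨u1, u2, u3, h1, h2, h3, hm1, hm2, hm3, he⟩ := he
  set t1 := Real.sqrt (kinetic u1) with ht1
  set t2 := Real.sqrt (kinetic u2) with ht2
  set t3 := Real.sqrt (kinetic u3) with ht3
  have hk1 : kinetic u1 = t1 ^ 2 := (Real.sq_sqrt (aux_kinetic_nonneg u1)).symm
  have hk2 : kinetic u2 = t2 ^ 2 := (Real.sq_sqrt (aux_kinetic_nonneg u2)).symm
  have hk3 : kinetic u3 = t3 ^ 2 := (Real.sq_sqrt (aux_kinetic_nonneg u3)).symm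
  have hpot : ∀ (u : ℝ → ℂ) (m : ℝ), InH1 u → massSq u = m → 0 ≤ m →
      β / (p + 1) * potential p u ≤
        (β / (p + 1) * ((2 * Real.sqrt m) ^ b * m)) * Real.sqrt (kinetic u) ^ b := by
    intro u m hu hm hm0
    have h := aux_potential_le hu hp
    rw [hm] at h
    have hsplit : (2 * (Real.sqrt m * Real.sqrt (kinetic u))) ^ b
        = (2 * Real.sqrt m) ^ b * Real.sqrt (kinetic u) ^ b := by
      rw [show 2 * (Real.sqrt m * Real.sqrt (kinetic u))
          = (2 * Real.sqrt m) * Real.sqrt (kinetic u) by ring,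
        Real.mul_rpow (by positivity) (Real.sqrt_nonneg _)]
    rw [hsplit] at h
    calc β / (p + 1) * potential p u
        ≤ β / (p + 1) * ((2 * Real.sqrt m) ^ b * Real.sqrt (kinetic u) ^ b * m) :=
          mul_le_mul_of_nonneg_left h (by positivity)
      _ = (β / (p + 1) * ((2 * Real.sqrt m) ^ b * m)) * Real.sqrt (kinetic u) ^ b := by ring
  have hpot1 := hpot u1 γ h1 hm1 hγ
  have hpot2 := hpot u2 μ h2 hm2 hμ
  have hpot3 := hpot u3 s h3 hm3 hs
  rw [← ht1] at hpot1
  rw [← ht2] at hpot2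
  rw [← ht3] at hpot3
  have hint : α * interaction u1 u2 u3 ≤ C0 * t1 ^ ((1:ℝ)/2) := by
    have h := aux_interaction_le h1 h2 h3
    rw [hm1, hm2, hm3, ← ht1] at h
    have hsq : Real.sqrt (2 * (Real.sqrt γ * t1)) = Real.sqrt (2 * Real.sqrt γ) * t1 ^ ((1:ℝ)/2) := by
      rw [show 2 * (Real.sqrt γ * t1) = (2 * Real.sqrt γ) * t1 by ring,
        Real.sqrt_mul (by positivity)]
      rw [Real.sqrt_eq_rpow t1]
    rw [hsq] at h
    calc α * interaction u1 u2 u3 ≤ α * |interaction u1 u2 u3| := by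
          have := le_abs_self (interaction u1 u2 u3)
          exact mul_le_mul_of_nonneg_left this hα.le
      _ ≤ α * (Real.sqrt (2 * Real.sqrt γ) * t1 ^ ((1:ℝ)/2) * (Real.sqrt μ * Real.sqrt s)) :=
          mul_le_mul_of_nonneg_left h hα.le
      _ = C0 * t1 ^ ((1:ℝ)/2) := by rw [hC0]; ring
  have hy1 := hD1 t1 (Real.sqrt_nonneg _)
  have hy2 := hD2 t2 (Real.sqrt_nonneg _)
  have hy3 := hD3 t3 (Real.sqrt_nonneg _)
  have hy0 := hD0 t1 (Real.sqrt_nonneg _)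
  rw [he]
  unfold energy
  rw [hk1, hk2, hk3]
  rw [hC1] at hy1
  rw [hC2] at hy2
  rw [hC3] at hy3
  linarith [hy1, hy2, hy3, hy0, hpot1, hpot2, hpot3, hint, sq_nonneg t1, sq_nonneg t2, sq_nonneg t3]

/-- Gaussian trial function. -/
def gaussF (c θ : ℝ) : ℝ → ℂ := fun x => ((c * Real.sqrt θ * Real.exp (-(θ * x) ^ 2) : ℝ) : ℂ)

lemma gauss_hasDerivAt (c θ x : ℝ) :
    HasDerivAt (gaussF c θ)
      (((c * Real.sqrt θ * (Real.exp (-(θ * x) ^ 2) * -(2 * (θ * x) * θ)) : ℝ) : ℂ)) x := by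
  have h1 : HasDerivAt (fun x : ℝ => θ * x) θ x := by
    simpa using (hasDerivAt_id x).const_mul θ
  have h2 : HasDerivAt (fun x : ℝ => (θ * x) ^ 2) (2 * (θ * x) * θ) x := by
    simpa using h1.fun_pow 2
  have h3 := (h2.neg).exp
  have h4 := h3.const_mul (c * Real.sqrt θ)
  have h5 := h4.ofReal_comp
  convert h5 using 2 <;> rfl

lemma gauss_deriv (c θ : ℝ) : deriv (gaussF c θ)
    = fun x => ((c * Real.sqrt θ * (Real.exp (-(θ * x) ^ 2) * -(2 * (θ * x) * θ)) : ℝ) : ℂ) :=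
  funext fun x => (gauss_hasDerivAt c θ x).deriv

lemma gauss_norm_sq {θ : ℝ} (hθ : 0 < θ) (c x : ℝ) :
    ‖gaussF c θ x‖ ^ 2 = (c ^ 2 * θ) * Real.exp (-(2 * θ ^ 2) * x ^ 2) := by
  have e2 : Real.exp (-(θ * x) ^ 2) ^ 2 = Real.exp (-(2 * θ ^ 2) * x ^ 2) := by
    rw [sq, ← Real.exp_add]; ring_nf
  have s2 : Real.sqrt θ ^ 2 = θ := Real.sq_sqrt hθ.le
  calc ‖gaussF c θ x‖ ^ 2
      = (c * Real.sqrt θ * Real.exp (-(θ * x) ^ 2)) ^ 2 := by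
        rw [gaussF, Complex.norm_real, Real.norm_eq_abs, _root_.sq_abs]
    _ = c ^ 2 * Real.sqrt θ ^ 2 * Real.exp (-(θ * x) ^ 2) ^ 2 := by ring
    _ = (c ^ 2 * θ) * Real.exp (-(2 * θ ^ 2) * x ^ 2) := by rw [s2, e2]

lemma gauss_deriv_norm_sq {θ : ℝ} (hθ : 0 < θ) (c x : ℝ) :
    ‖deriv (gaussF c θ) x‖ ^ 2
      = (4 * c ^ 2 * θ ^ 5) * (x ^ 2 * Real.exp (-(2 * θ ^ 2) * x ^ 2)) := by
  have e2 : Real.exp (-(θ * x) ^ 2) ^ 2 = Real.exp (-(2 * θ ^ 2) * x ^ 2) := by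
    rw [sq, ← Real.exp_add]; ring_nf
  have s2 : Real.sqrt θ ^ 2 = θ := Real.sq_sqrt hθ.le
  calc ‖deriv (gaussF c θ) x‖ ^ 2
      = (c * Real.sqrt θ * (Real.exp (-(θ * x) ^ 2) * -(2 * (θ * x) * θ))) ^ 2 := by
        rw [gauss_deriv, Complex.norm_real, Real.norm_eq_abs, _root_.sq_abs]
    _ = c ^ 2 * Real.sqrt θ ^ 2 * (Real.exp (-(θ * x) ^ 2) ^ 2 * (4 * θ ^ 4 * x ^ 2)) := by
        ring
    _ = (4 * c ^ 2 * θ ^ 5) * (x ^ 2 * Real.exp (-(2 * θ ^ 2) * x ^ 2)) := by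
        rw [s2, e2]; ring

lemma gauss_sq_integrable {θ : ℝ} (hθ : 0 < θ) (c : ℝ) :
    Integrable (fun x => ‖gaussF c θ x‖ ^ 2) (volume : Measure ℝ) := by
  have h : Integrable (fun x : ℝ => (c ^ 2 * θ) * Real.exp (-(2 * θ ^ 2) * x ^ 2))
      (volume : Measure ℝ) := (integrable_exp_neg_mul_sq (by positivity)).const_mul _
  exact h.congr (ae_of_all _ fun x => (gauss_norm_sq hθ c x).symm)

lemma gauss_deriv_sq_integrable {θ : ℝ} (hθ : 0 < θ) (c : ℝ) :
    Integrable (fun x => ‖deriv (gaussF c θ) x‖ ^ 2) (volume : Measure ℝ) := by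
  have h0 : Integrable (fun x : ℝ => x ^ (2:ℝ) * Real.exp (-(2 * θ ^ 2) * x ^ 2))
      (volume : Measure ℝ) :=
    integrable_rpow_mul_exp_neg_mul_sq (by positivity) (by norm_num)
  have h1 : Integrable (fun x : ℝ => x ^ 2 * Real.exp (-(2 * θ ^ 2) * x ^ 2))
      (volume : Measure ℝ) := by
    refine h0.congr (ae_of_all _ fun x => ?_)
    simp [Real.rpow_two]
  exact (h1.const_mul _).congr (ae_of_all _ fun x => (gauss_deriv_norm_sq hθ c x).symm)

lemma gauss_continuous (c θ : ℝ) : Continuous (gaussF c θ) := by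
  refine Complex.continuous_ofReal.comp ?_
  exact (continuous_const.mul (((continuous_const.mul continuous_id).pow 2).neg.rexp))

lemma gauss_inH1 {θ : ℝ} (hθ : 0 < θ) (c : ℝ) : InH1 (gaussF c θ) := by
  refine ⟨?_, ?_, ?_⟩
  · exact (memLp_two_iff_integrable_sq_norm
      (gauss_continuous c θ).aestronglyMeasurable).mpr (gauss_sq_integrable hθ c)
  · exact fun x => (gauss_hasDerivAt c θ x).differentiableAt
  · have hcont : Continuous (deriv (gaussF c θ)) := by
      rw [gauss_deriv]
      refine Complex.continuous_ofReal.comp ?_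
      fun_prop
    exact (memLp_two_iff_integrable_sq_norm hcont.aestronglyMeasurable).mpr
      (gauss_deriv_sq_integrable hθ c)

lemma gauss_massSq {θ : ℝ} (hθ : 0 < θ) (c : ℝ) :
    massSq (gaussF c θ) = c ^ 2 * Real.sqrt (Real.pi / 2) := by
  have h1 : massSq (gaussF c θ)
      = ∫ x : ℝ, (c ^ 2 * θ) * Real.exp (-(2 * θ ^ 2) * x ^ 2) := by
    rw [massSq]
    exact integral_congr_ae (ae_of_all _ fun x => gauss_norm_sq hθ c x)
  rw [h1, MeasureTheory.integral_const_mul, integral_gaussian]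
  have h2 : Real.pi / (2 * θ ^ 2) = (Real.pi / 2) * (θ⁻¹) ^ 2 := by
    field_simp
  rw [h2, Real.sqrt_mul (by positivity), Real.sqrt_sq (by positivity)]
  field_simp

lemma gauss_kinetic {θ : ℝ} (hθ : 0 < θ) (c : ℝ) :
    kinetic (gaussF c θ)
      = (4 * c ^ 2 * (∫ y : ℝ, y ^ 2 * Real.exp (-(2:ℝ) * y ^ 2))) * θ ^ 2 := by
  have h1 : kinetic (gaussF c θ)
      = ∫ x : ℝ, (4 * c ^ 2 * θ ^ 5) * (x ^ 2 * Real.exp (-(2 * θ ^ 2) * x ^ 2)) := by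
    rw [kinetic]
    exact integral_congr_ae (ae_of_all _ fun x => gauss_deriv_norm_sq hθ c x)
  have hcv := MeasureTheory.Measure.integral_comp_mul_left
    (fun y : ℝ => y ^ 2 * Real.exp (-(2:ℝ) * y ^ 2)) θ
  have hptw : ∀ x : ℝ, (θ * x) ^ 2 * Real.exp (-(2:ℝ) * (θ * x) ^ 2)
      = θ ^ 2 * (x ^ 2 * Real.exp (-(2 * θ ^ 2) * x ^ 2)) := by
    intro x
    rw [show (-(2:ℝ) * (θ * x) ^ 2) = -(2 * θ ^ 2) * x ^ 2 by ring]
    ring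
  rw [show (fun x : ℝ => (fun y : ℝ => y ^ 2 * Real.exp (-(2:ℝ) * y ^ 2)) (θ * x))
      = fun x : ℝ => θ ^ 2 * (x ^ 2 * Real.exp (-(2 * θ ^ 2) * x ^ 2)) from
    funext fun x => hptw x] at hcv
  rw [MeasureTheory.integral_const_mul, abs_of_pos (by positivity : (0:ℝ) < θ⁻¹),
    smul_eq_mul] at hcv
  have hI : ∫ x : ℝ, x ^ 2 * Real.exp (-(2 * θ ^ 2) * x ^ 2)
      = θ⁻¹ ^ 3 * ∫ y : ℝ, y ^ 2 * Real.exp (-(2:ℝ) * y ^ 2) := by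
    have hθ2 : θ ^ 2 ≠ 0 := by positivity
    rw [show θ⁻¹ ^ 3 * ∫ y : ℝ, y ^ 2 * Real.exp (-(2:ℝ) * y ^ 2)
        = (θ ^ 2)⁻¹ * (θ⁻¹ * ∫ y : ℝ, y ^ 2 * Real.exp (-(2:ℝ) * y ^ 2)) by ring, ← hcv,
      inv_mul_cancel_left₀ hθ2]
  rw [h1, MeasureTheory.integral_const_mul, hI]
  field_simp
  ring

lemma gauss_potential {p θ c : ℝ} (hp : 1 < p) (hθ : 0 < θ) (hc : 0 < c) :
    potential p (gaussF c θ)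
      = (c ^ (p + 1) * Real.sqrt (Real.pi / (p + 1))) * θ ^ ((p - 1) / 2) := by
  have hp1 : (0:ℝ) < p + 1 := by linarith
  have hbase : ∀ x : ℝ, ‖gaussF c θ x‖ ^ (p + 1)
      = (c * Real.sqrt θ) ^ (p + 1) * Real.exp (-((p + 1) * θ ^ 2) * x ^ 2) := by
    intro x
    have hnorm : ‖gaussF c θ x‖ = (c * Real.sqrt θ) * Real.exp (-(θ * x) ^ 2) := by
      rw [gaussF, Complex.norm_real, Real.norm_eq_abs, abs_of_pos (by positivity), mul_assoc]
    rw [hnorm, Real.mul_rpow (by positivity) (Real.exp_pos _).le]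
    congr 1
    rw [Real.rpow_def_of_pos (Real.exp_pos _), Real.log_exp]
    congr 1
    ring
  have h1 : potential p (gaussF c θ)
      = (c * Real.sqrt θ) ^ (p + 1) * Real.sqrt (Real.pi / ((p + 1) * θ ^ 2)) := by
    rw [potential]
    rw [integral_congr_ae (ae_of_all _ hbase), MeasureTheory.integral_const_mul,
      integral_gaussian]
  rw [h1]
  have h2 : Real.sqrt (Real.pi / ((p + 1) * θ ^ 2))
      = Real.sqrt (Real.pi / (p + 1)) * θ⁻¹ := by
    rw [show Real.pi / ((p + 1) * θ ^ 2) = (Real.pi / (p + 1)) * (θ⁻¹) ^ 2 by field_simp,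
      Real.sqrt_mul (by positivity), Real.sqrt_sq (by positivity)]
  have h3 : (c * Real.sqrt θ) ^ (p + 1) = c ^ (p + 1) * θ ^ ((p + 1) / 2) := by
    rw [Real.mul_rpow hc.le (Real.sqrt_nonneg _)]
    congr 1
    rw [Real.sqrt_eq_rpow, ← Real.rpow_mul hθ.le]
    congr 1
    ring
  rw [h2, h3]
  have h4 : θ ^ ((p + 1) / 2) * θ⁻¹ = θ ^ ((p - 1) / 2) := by
    rw [show θ⁻¹ = θ ^ (-1 : ℝ) by rw [Real.rpow_neg_one], ← Real.rpow_add hθ]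
    congr 1
    ring
  calc c ^ (p + 1) * θ ^ ((p + 1) / 2) * (Real.sqrt (Real.pi / (p + 1)) * θ⁻¹)
      = c ^ (p + 1) * Real.sqrt (Real.pi / (p + 1)) * (θ ^ ((p + 1) / 2) * θ⁻¹) := by ring
    _ = (c ^ (p + 1) * Real.sqrt (Real.pi / (p + 1))) * θ ^ ((p - 1) / 2) := by rw [h4]

lemma gauss_interaction_nonneg {θ c1 c2 c3 : ℝ} (h1 : 0 ≤ c1) (h2 : 0 ≤ c2) (h3 : 0 ≤ c3) :
    0 ≤ interaction (gaussF c1 θ) (gaussF c2 θ) (gaussF c3 θ) := by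
  rw [interaction]
  refine integral_nonneg fun x => ?_
  simp only [gaussF, Complex.conj_ofReal, ← Complex.ofReal_mul, Complex.ofReal_re]
  have := Real.exp_nonneg (-(θ * x) ^ 2)
  have := Real.sqrt_nonneg θ
  positivity

lemma aux_exists_neg (p α β γ μ s : ℝ) (hp : 1 < p) (hp5 : p < 5) (hα : 0 < α) (hβ : 0 < β)
    (hγ : 0 < γ) (hμ : 0 < μ) (hs : 0 < s) :
    ∃ e ∈ constraintSet p α β γ μ s, e < 0 := by
  have hpi := Real.pi_pos
  have hp1 : (0:ℝ) < p + 1 := by linarith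
  have h5p : (0:ℝ) < 5 - p := by linarith
  have hπ2 : (0:ℝ) < Real.sqrt (Real.pi / 2) := Real.sqrt_pos.mpr (by positivity)
  set c1 := Real.sqrt (γ / Real.sqrt (Real.pi / 2)) with hc1def
  set c2 := Real.sqrt (μ / Real.sqrt (Real.pi / 2)) with hc2def
  set c3 := Real.sqrt (s / Real.sqrt (Real.pi / 2)) with hc3def
  have hc1 : 0 < c1 := Real.sqrt_pos.mpr (by positivity)
  have hc2 : 0 < c2 := Real.sqrt_pos.mpr (by positivity)
  have hc3 : 0 < c3 := Real.sqrt_pos.mpr (by positivity)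
  obtain ⟨A, hAdef⟩ : ∃ A : ℝ, A = ∫ y : ℝ, y ^ 2 * Real.exp (-(2:ℝ) * y ^ 2) := ⟨_, rfl⟩
  have hA : 0 ≤ A := hAdef ▸ integral_nonneg fun y => by positivity
  obtain ⟨CA, hCAdef⟩ : ∃ CA : ℝ, CA = 2 * (c1 ^ 2 + c2 ^ 2 + c3 ^ 2) * A := ⟨_, rfl⟩
  have hCA : 0 ≤ CA := by rw [hCAdef]; positivity
  obtain ⟨CB, hCBdef⟩ : ∃ CB : ℝ, CB = β / (p + 1) *
      ((c1 ^ (p + 1) + c2 ^ (p + 1) + c3 ^ (p + 1)) * Real.sqrt (Real.pi / (p + 1))) := ⟨_, rfl⟩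
  have hCB : 0 < CB := by
    rw [hCBdef]
    have h1 := Real.rpow_pos_of_pos hc1 (p + 1)
    have h2 := Real.rpow_pos_of_pos hc2 (p + 1)
    have h3 := Real.rpow_pos_of_pos hc3 (p + 1)
    have h4 : (0:ℝ) < Real.sqrt (Real.pi / (p + 1)) := Real.sqrt_pos.mpr (by positivity)
    positivity
  set θ := min 1 ((CB / (2 * (CA + 1))) ^ ((2:ℝ) / (5 - p))) with hθdef
  have hθ : 0 < θ := lt_min one_pos (Real.rpow_pos_of_pos (by positivity) _)
  have hmass1 : massSq (gaussF c1 θ) = γ := by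
    rw [gauss_massSq hθ, hc1def, Real.sq_sqrt (by positivity), div_mul_cancel₀ _ hπ2.ne']
  have hmass2 : massSq (gaussF c2 θ) = μ := by
    rw [gauss_massSq hθ, hc2def, Real.sq_sqrt (by positivity), div_mul_cancel₀ _ hπ2.ne']
  have hmass3 : massSq (gaussF c3 θ) = s := by
    rw [gauss_massSq hθ, hc3def, Real.sq_sqrt (by positivity), div_mul_cancel₀ _ hπ2.ne']
  have hint := gauss_interaction_nonneg (θ := θ) hc1.le hc2.le hc3.le
  have hE : energy p α β (gaussF c1 θ) (gaussF c2 θ) (gaussF c3 θ)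
      ≤ CA * θ ^ 2 - CB * θ ^ ((p - 1) / 2) := by
    unfold energy
    rw [gauss_kinetic hθ c1, gauss_kinetic hθ c2, gauss_kinetic hθ c3,
      gauss_potential hp hθ hc1, gauss_potential hp hθ hc2, gauss_potential hp hθ hc3,
      ← hAdef, hCAdef, hCBdef]
    have := mul_nonneg hα.le hint
    linarith
  have hθ1 : θ ≤ (CB / (2 * (CA + 1))) ^ ((2:ℝ) / (5 - p)) := min_le_right _ _
  have hcollapse : ((CB / (2 * (CA + 1))) ^ ((2:ℝ) / (5 - p))) ^ ((5 - p) / 2)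
      = CB / (2 * (CA + 1)) := by
    rw [← Real.rpow_mul (by positivity),
      show (2:ℝ) / (5 - p) * ((5 - p) / 2) = 1 by field_simp, Real.rpow_one]
  have h1 : θ ^ ((5 - p) / 2) ≤ CB / (2 * (CA + 1)) := by
    calc θ ^ ((5 - p) / 2)
        ≤ ((CB / (2 * (CA + 1))) ^ ((2:ℝ) / (5 - p))) ^ ((5 - p) / 2) :=
          Real.rpow_le_rpow hθ.le hθ1 (by positivity)
      _ = CB / (2 * (CA + 1)) := hcollapse
  have h2 : CA * θ ^ ((5 - p) / 2) < CB := by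
    have hlt : CA * (CB / (2 * (CA + 1))) < CB := by
      rw [mul_div_assoc'] at *
      rw [div_lt_iff₀ (by positivity)]
      nlinarith
    calc CA * θ ^ ((5 - p) / 2) ≤ CA * (CB / (2 * (CA + 1))) :=
        mul_le_mul_of_nonneg_left h1 hCA
      _ < CB := hlt
  have hθsplit : θ ^ 2 = θ ^ ((p - 1) / 2) * θ ^ ((5 - p) / 2) := by
    rw [← Real.rpow_two, ← Real.rpow_add hθ]
    congr 1
    ring
  have hfinal : CA * θ ^ 2 - CB * θ ^ ((p - 1) / 2) < 0 := by
    rw [hθsplit]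
    have hb : 0 < θ ^ ((p - 1) / 2) := Real.rpow_pos_of_pos hθ _
    have hmul := mul_pos hb (show 0 < CB - CA * θ ^ ((5 - p) / 2) by linarith)
    linarith [hmul, mul_lt_mul_of_pos_left (show CA * θ ^ ((5 - p) / 2) < CB from h2) hb]
  exact ⟨energy p α β (gaussF c1 θ) (gaussF c2 θ) (gaussF c3 θ),
    ⟨gaussF c1 θ, gaussF c2 θ, gaussF c3 θ, gauss_inH1 hθ c1, gauss_inH1 hθ c2,
      gauss_inH1 hθ c3, hmass1, hmass2, hmass3, rfl⟩,
    lt_of_le_of_lt hE hfinal⟩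

end Aux

noncomputable section

theorem finite_and_negative_infimum
    (p α β γ μ s : ℝ) (hp : 1 < p) (hp5 : p < 5) (hα : 0 < α) (hβ : 0 < β)
    (hγ : 0 < γ) (hμ : 0 < μ) (hs : 0 < s) :
    BddBelow (constraintSet p α β γ μ s) ∧ Iinf p α β γ μ s < 0 := by
  have hBdd := aux_bddBelow p α β γ μ s hp hp5 hα hβ hγ.le hμ.le hs.le
  obtain ⟨e, he, hneg⟩ := aux_exists_neg p α β γ μ s hp hp5 hα hβ hγ hμ hs
  exact ⟨hBdd, lt_of_le_of_lt (csInf_le hBdd he) hneg⟩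

end
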